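/- Let p ≤ q be positive integers, A ∈ ℝ^{p×q} with singular value decomposition A = R [Σ 0] Sᵀ, Σ = Diag(σ₁,…,σ_p), σ₁ ≥ … ≥ σ_p ≥ 0, and h(t) = max{t−1,0}. Then the proximal mapping of the nuclear norm ‖·‖_* at A equals Prox_{‖·‖_*}(A) = R [Σ_h 0] Sᵀ, where Σ_h = Diag(h(σ₁),…,h(σ_p)); that is, R [Σ_h 0] Sᵀ is the unique minimizer of Y ↦ ‖Y‖_* + ½‖Y − A‖_F². -/

import Mathlib

open Matrix

noncomputable section

/-- Nuclear norm of a real `p × q` matrix: the sum of its singular values, i.e.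
the sum of the square roots of the eigenvalues of `A Aᵀ`. -/
def nuclearNorm {p q : ℕ} (A : Matrix (Fin p) (Fin q) ℝ) : ℝ :=
  ∑ i, Real.sqrt ((Matrix.isHermitian_mul_conjTranspose_self A).eigenvalues i)

/-- Frobenius norm of a real matrix. -/
def frobNorm {p q : ℕ} (A : Matrix (Fin p) (Fin q) ℝ) : ℝ :=
  Real.sqrt (∑ i, ∑ j, (A i j) ^ 2)

lemma realCT {m n : Type*} (M : Matrix m n ℝ) : Mᴴ = Mᵀ := by
  ext i j; simp [conjTranspose_apply]

-- charmatrix of conjugation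
lemma charpoly_conj {n : Type*} [Fintype n] [DecidableEq n]
    (W N : Matrix n n ℝ) (hW : W * Wᵀ = 1) :
    (W * N * Wᵀ).charpoly = N.charpoly := by
  have hmap : ∀ (X Y : Matrix n n ℝ), (X*Y).map (Polynomial.C : ℝ →+* Polynomial ℝ) = X.map Polynomial.C * Y.map Polynomial.C := fun X Y => Matrix.map_mul
  have hW' : W.map (Polynomial.C : ℝ →+* Polynomial ℝ) * (Wᵀ).map Polynomial.C = 1 := by
    rw [← hmap, hW]; simp
  have hcm : charmatrix (W * N * Wᵀ) =
      W.map (Polynomial.C : ℝ →+* Polynomial ℝ) * charmatrix N * (Wᵀ).map Polynomial.C := by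
    unfold charmatrix
    rw [mul_sub, sub_mul]
    congr 1
    · rw [← (Matrix.scalar_commute Polynomial.X (fun r => Commute.all _ r) (W.map (Polynomial.C : ℝ →+* Polynomial ℝ))).eq, mul_assoc, hW', mul_one]
    · rw [RingHom.mapMatrix_apply, RingHom.mapMatrix_apply, hmap, hmap]
  rw [Matrix.charpoly, hcm, det_mul, det_mul, Matrix.charpoly, mul_comm, ← mul_assoc]
  rw [mul_comm (((Wᵀ).map Polynomial.C).det), ← det_mul, hW']
  simp

lemma charpoly_diagonal {n : Type*} [Fintype n] [DecidableEq n] (d : n → ℝ) :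
    (diagonal d).charpoly = ∏ i, (Polynomial.X - Polynomial.C (d i)) := by
  rw [Matrix.charpoly]
  have : charmatrix (diagonal d) = diagonal (fun i => Polynomial.X - Polynomial.C (d i)) := by
    ext i j
    by_cases h : i = j
    · subst h; simp
    · simp [h, charmatrix_apply_ne _ _ _ h, diagonal_apply_ne _ h]
  rw [this, det_diagonal]

lemma eigsum {p : ℕ} (M : Matrix (Fin p) (Fin p) ℝ) (hM : M.IsHermitian)
    (W : Matrix (Fin p) (Fin p) ℝ) (d : Fin p → ℝ)
    (hW1 : W * Wᵀ = 1) (hMd : M = W * diagonal d * Wᵀ) (f : ℝ → ℝ) :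
    ∑ i, f (hM.eigenvalues i) = ∑ i, f (d i) := by
  set U : Matrix (Fin p) (Fin p) ℝ := (hM.eigenvectorUnitary : Matrix (Fin p) (Fin p) ℝ) with hUdef
  have hU1 : U * Uᵀ = 1 := by
    have := (Matrix.mem_unitaryGroup_iff).mp hM.eigenvectorUnitary.2
    rwa [Matrix.star_eq_conjTranspose, realCT] at this
  have hspec : M = U * diagonal hM.eigenvalues * Uᵀ := by
    have := hM.spectral_theorem
    rwa [Unitary.conjStarAlgAut_apply, Matrix.star_eq_conjTranspose, realCT, RCLike.ofReal_real_eq_id,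
      Function.id_comp] at this
  have hcp : (diagonal d).charpoly = (diagonal hM.eigenvalues).charpoly := by
    rw [← charpoly_conj W (diagonal d) hW1, ← charpoly_conj U (diagonal hM.eigenvalues) hU1,
      ← hMd, ← hspec]
  rw [_root_.charpoly_diagonal, _root_.charpoly_diagonal] at hcp
  have hmul : (Finset.univ.val.map d) = (Finset.univ.val.map hM.eigenvalues) := by
    have h1 := congrArg Polynomial.roots hcp
    rw [Finset.prod_eq_multiset_prod, Finset.prod_eq_multiset_prod] at h1
    have e1 : (Finset.univ.val.map (fun i => Polynomial.X - Polynomial.C (d i)))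
        = ((Finset.univ.val.map d).map (fun a => Polynomial.X - Polynomial.C a)) := by
      rw [Multiset.map_map]; rfl
    have e2 : (Finset.univ.val.map (fun i => Polynomial.X - Polynomial.C (hM.eigenvalues i)))
        = ((Finset.univ.val.map hM.eigenvalues).map (fun a => Polynomial.X - Polynomial.C a)) := by
      rw [Multiset.map_map]; rfl
    rw [e1, e2, Polynomial.roots_multiset_prod_X_sub_C, Polynomial.roots_multiset_prod_X_sub_C] at h1
    exact h1
  rw [Finset.sum_eq_multiset_sum, Finset.sum_eq_multiset_sum]
  have e1 : (Finset.univ.val.map (fun i => f (d i))) = ((Finset.univ.val.map d).map f) := by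
    rw [Multiset.map_map]; rfl
  have e2 : (Finset.univ.val.map (fun i => f (hM.eigenvalues i))) = ((Finset.univ.val.map hM.eigenvalues).map f) := by
    rw [Multiset.map_map]; rfl
  rw [e1, e2, hmul]

section rect
variable {p q : ℕ} (hpq : p ≤ q)

def Dg (v : Fin p → ℝ) : Matrix (Fin p) (Fin q) ℝ :=
  Matrix.of (fun (i : Fin p) (j : Fin q) => if (i : ℕ) = (j : ℕ) then v i else 0)

lemma rect_mul (hpq : p ≤ q) (v w : Fin p → ℝ) :
    (Dg (q := q) v) * (Dg (q := q) w)ᵀ = diagonal (fun i => v i * w i) := by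
  ext i j
  rw [Matrix.mul_apply]
  simp only [Dg, transpose_apply, of_apply]
  rw [Finset.sum_eq_single (Fin.castLE hpq i)]
  · by_cases h : i = j
    · subst h; simp [Fin.castLE]
    · have h2 : ¬ ((j : ℕ) = ((Fin.castLE hpq i) : ℕ)) := by
        simp only [Fin.coe_castLE]
        exact fun hc => h (Fin.ext hc.symm)
      simp [h2, diagonal_apply_ne _ h]
      exact fun hc => absurd (Fin.ext hc).symm h
  · intro k _ hk
    have h1 : ¬ ((i : ℕ) = (k : ℕ)) := fun hc => hk (Fin.ext (by simpa using hc.symm))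
    simp [h1]
  · simp

lemma trace_form (Y G : Matrix (Fin p) (Fin q) ℝ) :
    trace (Y * Gᵀ) = ∑ i, ∑ j, Y i j * G i j := by
  simp [Matrix.trace, Matrix.diag, Matrix.mul_apply]

lemma trace_sq_nonneg (N : Matrix (Fin p) (Fin q) ℝ) : 0 ≤ trace (N * Nᵀ) := by
  rw [trace_form]
  apply Finset.sum_nonneg; intro i _
  apply Finset.sum_nonneg; intro j _
  exact mul_self_nonneg _

end rect

section key
variable {p q : ℕ}

lemma conjMulDiag (U : Matrix (Fin p) (Fin p) ℝ) (hU2 : Uᵀ * U = 1) (d e : Fin p → ℝ) :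
    (U * diagonal d * Uᵀ) * (U * diagonal e * Uᵀ) = U * diagonal (fun i => d i * e i) * Uᵀ := by
  have : diagonal d * (Uᵀ * U) * diagonal e = diagonal (fun i => d i * e i) := by
    rw [hU2, mul_one, diagonal_mul_diagonal]
  calc (U * diagonal d * Uᵀ) * (U * diagonal e * Uᵀ)
      = U * (diagonal d * (Uᵀ * U) * diagonal e) * Uᵀ := by
        simp only [mul_assoc]
    _ = U * diagonal (fun i => d i * e i) * Uᵀ := by rw [this]

lemma sym_conj (U : Matrix (Fin p) (Fin p) ℝ) (d : Fin p → ℝ) :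
    (U * diagonal d * Uᵀ)ᵀ = U * diagonal d * Uᵀ := by
  rw [transpose_mul, transpose_mul, transpose_transpose, diagonal_transpose, mul_assoc]

lemma trace_conj (U : Matrix (Fin p) (Fin p) ℝ) (hU2 : Uᵀ * U = 1) (d : Fin p → ℝ) :
    trace (U * diagonal d * Uᵀ) = ∑ i, d i := by
  rw [trace_mul_comm, ← mul_assoc, hU2, one_mul, trace_diagonal]

lemma trace_conj_conj (U R : Matrix (Fin p) (Fin p) ℝ) (a b : Fin p → ℝ) :
    trace ((U * diagonal a * Uᵀ) * (R * diagonal b * Rᵀ)) =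
      ∑ i, ∑ k, b i * (a k * ((Rᵀ * U) i k)^2) := by
  have h1 : (U * diagonal a * Uᵀ) * (R * diagonal b * Rᵀ)
      = (U * diagonal a * (Uᵀ * R)) * (diagonal b * Rᵀ) := by simp only [mul_assoc]
  rw [h1, trace_mul_comm, ← mul_assoc, ← mul_assoc]
  have h2 : diagonal b * Rᵀ * (U * diagonal a) * Uᵀ * R
      = diagonal b * ((Rᵀ * U) * diagonal a * (Rᵀ * U)ᵀ) := by
    rw [transpose_mul, transpose_transpose]
    simp only [mul_assoc]
  rw [h2]
  have hdiagtr : ∀ (M : Matrix (Fin p) (Fin p) ℝ), trace (diagonal b * M) = ∑ i, b i * M i i := by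
    intro M
    rw [Matrix.trace]
    simp [Matrix.diag_apply, Matrix.diagonal_mul]
  rw [hdiagtr]
  refine Finset.sum_congr rfl (fun i _ => ?_)
  have : (Rᵀ * U * diagonal a * (Rᵀ * U)ᵀ) i i = ∑ k, (Rᵀ * U) i k * a k * (Rᵀ * U) i k := by
    rw [Matrix.mul_apply]
    refine Finset.sum_congr rfl (fun k _ => ?_)
    rw [Matrix.mul_diagonal, Matrix.transpose_apply]
  rw [this, Finset.mul_sum]
  refine Finset.sum_congr rfl (fun k _ => ?_)
  ring


lemma real_spectral {p : ℕ} (M : Matrix (Fin p) (Fin p) ℝ) (hM : M.IsHermitian) :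
    ∃ U : Matrix (Fin p) (Fin p) ℝ, U * Uᵀ = 1 ∧ Uᵀ * U = 1 ∧
      M = U * diagonal hM.eigenvalues * Uᵀ := by
  refine ⟨(hM.eigenvectorUnitary : Matrix (Fin p) (Fin p) ℝ), ?_, ?_, ?_⟩
  · have := (Matrix.mem_unitaryGroup_iff).mp hM.eigenvectorUnitary.2
    rwa [Matrix.star_eq_conjTranspose, realCT] at this
  · have := (Matrix.mem_unitaryGroup_iff').mp hM.eigenvectorUnitary.2
    rwa [Matrix.star_eq_conjTranspose, realCT] at this
  · have := hM.spectral_theorem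
    rwa [Unitary.conjStarAlgAut_apply, Matrix.star_eq_conjTranspose, realCT, RCLike.ofReal_real_eq_id,
      Function.id_comp] at this

set_option maxHeartbeats 1000000 in
lemma key_ineq {p q : ℕ} (hp : 0 < p) (hpq : p ≤ q)
    (R : Matrix (Fin p) (Fin p) ℝ) (hR1 : R * Rᵀ = 1) (hR2 : Rᵀ * R = 1)
    (S : Matrix (Fin q) (Fin q) ℝ) (hS1 : S * Sᵀ = 1) (hS2 : Sᵀ * S = 1)
    (g : Fin p → ℝ) (hg0 : ∀ i, 0 ≤ g i) (hg1 : ∀ i, g i ≤ 1)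
    (Y : Matrix (Fin p) (Fin q) ℝ) :
    trace (Y * (R * Dg (q := q) g * Sᵀ)ᵀ) ≤ nuclearNorm Y := by
  set G := R * Dg (q := q) g * Sᵀ with hGdef
  have hherm := Matrix.isHermitian_mul_conjTranspose_self Y
  obtain ⟨U, hU1, hU2, hspecH⟩ := real_spectral (Y * Yᴴ) hherm
  set lam := hherm.eigenvalues with hlamdef
  have hlam0 : ∀ i, 0 ≤ lam i := fun i =>
    (Matrix.posSemidef_self_mul_conjTranspose Y).eigenvalues_nonneg i
  have hspec : Y * Yᵀ = U * diagonal lam * Uᵀ := by rw [← realCT Y]; exact hspecH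
  have hGG : G * Gᵀ = R * diagonal (fun i => g i * g i) * Rᵀ := by
    rw [hGdef, Matrix.transpose_mul, Matrix.transpose_mul, Matrix.transpose_transpose]
    have h1 : R * Dg (q := q) g * Sᵀ * (S * ((Dg (q := q) g)ᵀ * Rᵀ))
        = R * (Dg (q := q) g * Sᵀ * S * (Dg (q := q) g)ᵀ) * Rᵀ := by
      simp only [Matrix.mul_assoc]
    rw [h1, Matrix.mul_assoc (Dg (q := q) g) Sᵀ S, hS2, Matrix.mul_one, rect_mul hpq]
  have hnn : nuclearNorm Y = ∑ i, Real.sqrt (lam i) := rfl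
  have main : ∀ ε : ℝ, 0 < ε → trace (Y * Gᵀ) ≤ (∑ i, Real.sqrt (lam i)) + (p * ε) / 2 := by
    intro ε hε
    set dh : Fin p → ℝ := fun i => Real.sqrt (Real.sqrt (lam i) + ε) with hdh
    have hdhpos : ∀ i, 0 < dh i := fun i =>
      Real.sqrt_pos.mpr (by have := Real.sqrt_nonneg (lam i); linarith)
    have hdhsq : ∀ i, dh i * dh i = Real.sqrt (lam i) + ε := fun i =>
      Real.mul_self_sqrt (by have := Real.sqrt_nonneg (lam i); linarith)
    set dmh : Fin p → ℝ := fun i => (dh i)⁻¹ with hdmh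
    set Ph := U * diagonal dh * Uᵀ with hPh
    set Phi := U * diagonal dmh * Uᵀ with hPhi
    set N := Phi * Y - Ph * G with hN
    have h0 : 0 ≤ trace (N * Nᵀ) := trace_sq_nonneg N
    have hPhPhi : Ph * Phi = 1 := by
      rw [hPh, hPhi, conjMulDiag U hU2]
      have : (fun i => dh i * dmh i) = fun _ => (1:ℝ) := by
        ext i; exact mul_inv_cancel₀ (ne_of_gt (hdhpos i))
      rw [this, diagonal_one, mul_one, hU1]
    have hsymPh : Phᵀ = Ph := sym_conj U dh
    have hsymPhi : Phiᵀ = Phi := sym_conj U dmh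
    have e1 : trace (Phi * Y * (Phi * Y)ᵀ) = trace ((Phi * Phi) * (Y * Yᵀ)) := by
      rw [Matrix.transpose_mul, hsymPhi]
      have h : Phi * Y * (Yᵀ * Phi) = Phi * (Y * Yᵀ) * Phi := by
        simp only [Matrix.mul_assoc]
      rw [h, Matrix.trace_mul_comm, ← Matrix.mul_assoc]
    have e2 : trace (Phi * Y * (Ph * G)ᵀ) = trace (Y * Gᵀ) := by
      rw [Matrix.transpose_mul, hsymPh]
      have h : Phi * Y * (Gᵀ * Ph) = Phi * (Y * Gᵀ) * Ph := by
        simp only [Matrix.mul_assoc]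
      rw [h, Matrix.trace_mul_comm, ← Matrix.mul_assoc, hPhPhi, Matrix.one_mul]
    have e3 : trace (Ph * G * (Phi * Y)ᵀ) = trace (Y * Gᵀ) := by
      have h : trace (Ph * G * (Phi * Y)ᵀ) = trace (Phi * Y * (Ph * G)ᵀ) := by
        conv_lhs => rw [← Matrix.trace_transpose (Ph * G * (Phi * Y)ᵀ)]
        rw [Matrix.transpose_mul (Ph * G) ((Phi * Y)ᵀ), Matrix.transpose_transpose]
      rw [h, e2]
    have e4 : trace (Ph * G * (Ph * G)ᵀ) = trace ((Ph * Ph) * (G * Gᵀ)) := by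
      rw [Matrix.transpose_mul, hsymPh]
      have h : Ph * G * (Gᵀ * Ph) = Ph * (G * Gᵀ) * Ph := by
        simp only [Matrix.mul_assoc]
      rw [h, Matrix.trace_mul_comm, ← Matrix.mul_assoc]
    have hexp : trace (N * Nᵀ) =
        trace ((Phi * Phi) * (Y * Yᵀ)) - 2 * trace (Y * Gᵀ) + trace ((Ph * Ph) * (G * Gᵀ)) := by
      rw [hN, Matrix.transpose_sub, Matrix.sub_mul, Matrix.mul_sub, Matrix.mul_sub,
        Matrix.trace_sub, Matrix.trace_sub, Matrix.trace_sub, e1, e2, e3, e4]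
      ring
    have hPhiPhi : Phi * Phi = U * diagonal (fun i => dmh i * dmh i) * Uᵀ :=
      conjMulDiag U hU2 dmh dmh
    have t1 : trace ((Phi * Phi) * (Y * Yᵀ)) = ∑ i, (dmh i * dmh i) * lam i := by
      rw [hPhiPhi, hspec, conjMulDiag U hU2, trace_conj U hU2]
    have t1le : trace ((Phi * Phi) * (Y * Yᵀ)) ≤ ∑ i, Real.sqrt (lam i) := by
      rw [t1]
      apply Finset.sum_le_sum
      intro i _
      have hs := Real.sqrt_nonneg (lam i)
      have hpos : 0 < Real.sqrt (lam i) + ε := by linarith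
      have hdm : dmh i * dmh i = (Real.sqrt (lam i) + ε)⁻¹ := by
        rw [hdmh]
        simp only
        rw [← mul_inv, hdhsq]
      rw [hdm, inv_mul_eq_div, div_le_iff₀ hpos]
      nlinarith [Real.sq_sqrt (hlam0 i)]
    have hPhPh : Ph * Ph = U * diagonal (fun i => dh i * dh i) * Uᵀ := conjMulDiag U hU2 dh dh
    have t4 : trace ((Ph * Ph) * (G * Gᵀ)) =
        ∑ i, ∑ k, (g i * g i) * ((dh k * dh k) * ((Rᵀ * U) i k)^2) := by
      rw [hPhPh, hGG, trace_conj_conj]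
    have hW : (Rᵀ * U)ᵀ * (Rᵀ * U) = 1 := by
      rw [Matrix.transpose_mul, Matrix.transpose_transpose, Matrix.mul_assoc,
        ← Matrix.mul_assoc R, hR1, Matrix.one_mul, hU2]
    have hWcol : ∀ k, ∑ i, ((Rᵀ * U) i k)^2 = 1 := by
      intro k
      have h := congrFun (congrFun hW k) k
      rw [Matrix.mul_apply, Matrix.one_apply_eq] at h
      rw [← h]
      refine Finset.sum_congr rfl (fun i _ => ?_)
      rw [Matrix.transpose_apply, pow_two]
    have t4le : trace ((Ph * Ph) * (G * Gᵀ)) ≤ (∑ i, Real.sqrt (lam i)) + p * ε := by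
      rw [t4]
      have step1 : ∑ i, ∑ k, (g i * g i) * ((dh k * dh k) * ((Rᵀ * U) i k)^2)
          ≤ ∑ i : Fin p, ∑ k, (dh k * dh k) * ((Rᵀ * U) i k)^2 := by
        apply Finset.sum_le_sum; intro i _
        apply Finset.sum_le_sum; intro k _
        have h1 : 0 ≤ (dh k * dh k) * ((Rᵀ * U) i k)^2 :=
          mul_nonneg (le_of_lt (mul_pos (hdhpos k) (hdhpos k))) (sq_nonneg _)
        have h2 : g i * g i ≤ 1 := by
          have := hg0 i; have := hg1 i; nlinarith
        nlinarith
      have step2 : ∑ i : Fin p, ∑ k, (dh k * dh k) * ((Rᵀ * U) i k)^2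
          = (∑ i, Real.sqrt (lam i)) + p * ε := by
        rw [Finset.sum_comm]
        have hrow : ∀ k, ∑ i : Fin p, (dh k * dh k) * ((Rᵀ * U) i k)^2
            = Real.sqrt (lam k) + ε := by
          intro k
          rw [← Finset.mul_sum, hWcol, mul_one, hdhsq]
        rw [Finset.sum_congr rfl (fun k _ => hrow k), Finset.sum_add_distrib]
        simp [Finset.sum_const, Finset.card_univ]
      linarith [step1, le_of_eq step2]
    have hfin : 0 ≤ (∑ i, Real.sqrt (lam i)) - 2 * trace (Y * Gᵀ) +
        ((∑ i, Real.sqrt (lam i)) + p * ε) := by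
      have h0' := h0
      rw [hexp] at h0'
      linarith
    linarith
  rw [hnn]
  apply le_of_forall_pos_le_add
  intro ε hε
  have hp' : (0:ℝ) < p := by exact_mod_cast hp
  have hmain := main (2 * ε / p) (by positivity)
  have harith : ((p : ℝ) * (2 * ε / p)) / 2 = ε := by
    field_simp
  rw [harith] at hmain
  exact hmain

section assemble
variable {p q : ℕ}

lemma sandwich_mul (hpq : p ≤ q)
    (R : Matrix (Fin p) (Fin p) ℝ) (S : Matrix (Fin q) (Fin q) ℝ) (hS2 : Sᵀ * S = 1)
    (v w : Fin p → ℝ) :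
    (R * Dg (q := q) v * Sᵀ) * (R * Dg (q := q) w * Sᵀ)ᵀ
      = R * diagonal (fun i => v i * w i) * Rᵀ := by
  rw [Matrix.transpose_mul, Matrix.transpose_mul, Matrix.transpose_transpose]
  have h1 : R * Dg (q := q) v * Sᵀ * (S * ((Dg (q := q) w)ᵀ * Rᵀ))
      = R * (Dg (q := q) v * Sᵀ * S * (Dg (q := q) w)ᵀ) * Rᵀ := by
    simp only [Matrix.mul_assoc]
  rw [h1, Matrix.mul_assoc (Dg (q := q) v) Sᵀ S, hS2, Matrix.mul_one, rect_mul hpq]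

lemma nn_sandwich (hpq : p ≤ q)
    (R : Matrix (Fin p) (Fin p) ℝ) (hR1 : R * Rᵀ = 1)
    (S : Matrix (Fin q) (Fin q) ℝ) (hS2 : Sᵀ * S = 1)
    (v : Fin p → ℝ) (hv : ∀ i, 0 ≤ v i) :
    nuclearNorm (R * Dg (q := q) v * Sᵀ) = ∑ i, v i := by
  have hherm := Matrix.isHermitian_mul_conjTranspose_self (R * Dg (q := q) v * Sᵀ)
  have hMd : (R * Dg (q := q) v * Sᵀ) * (R * Dg (q := q) v * Sᵀ)ᴴ
      = R * diagonal (fun i => v i * v i) * Rᵀ := by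
    rw [realCT, sandwich_mul hpq R S hS2]
  have h := eigsum _ hherm R (fun i => v i * v i) hR1 hMd Real.sqrt
  have : nuclearNorm (R * Dg (q := q) v * Sᵀ) = ∑ i, Real.sqrt (hherm.eigenvalues i) := rfl
  rw [this, h]
  refine Finset.sum_congr rfl (fun i _ => Real.sqrt_mul_self (hv i))

def Fr (X : Matrix (Fin p) (Fin q) ℝ) : ℝ := ∑ i, ∑ j, (X i j) ^ 2

lemma Fr_nonneg (X : Matrix (Fin p) (Fin q) ℝ) : 0 ≤ Fr X :=
  Finset.sum_nonneg fun i _ => Finset.sum_nonneg fun j _ => sq_nonneg _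

lemma frob_sq (X : Matrix (Fin p) (Fin q) ℝ) : frobNorm X ^ 2 = Fr X :=
  Real.sq_sqrt (Fr_nonneg X)

lemma Fr_expand (Y Z A : Matrix (Fin p) (Fin q) ℝ) :
    Fr (Y - A) = Fr (Y - Z) + 2 * trace ((Y - Z) * (Z - A)ᵀ) + Fr (Z - A) := by
  rw [trace_form]
  simp only [Fr, Matrix.sub_apply]
  rw [Finset.mul_sum, ← Finset.sum_add_distrib, ← Finset.sum_add_distrib]
  refine Finset.sum_congr rfl (fun i _ => ?_)
  rw [Finset.mul_sum, ← Finset.sum_add_distrib, ← Finset.sum_add_distrib]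
  refine Finset.sum_congr rfl (fun j _ => ?_)
  ring

end assemble

lemma master {p q : ℕ} (hp : 0 < p) (hpq : p ≤ q)
    (R : Matrix (Fin p) (Fin p) ℝ) (hR1 : R * Rᵀ = 1) (hR2 : Rᵀ * R = 1)
    (S : Matrix (Fin q) (Fin q) ℝ) (hS1 : S * Sᵀ = 1) (hS2 : Sᵀ * S = 1)
    (σs : Fin p → ℝ) (hnonneg : ∀ i, 0 ≤ σs i)
    (A : Matrix (Fin p) (Fin q) ℝ)
    (hA : A = R * Dg (q := q) σs * Sᵀ)
    (Y : Matrix (Fin p) (Fin q) ℝ) :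
    nuclearNorm (R * Dg (q := q) (fun i => max (σs i - 1) 0) * Sᵀ) +
      (1/2) * Fr ((R * Dg (q := q) (fun i => max (σs i - 1) 0) * Sᵀ) - A) +
      (1/2) * Fr (Y - (R * Dg (q := q) (fun i => max (σs i - 1) 0) * Sᵀ)) ≤
    nuclearNorm Y + (1/2) * Fr (Y - A) := by
  set h : Fin p → ℝ := fun i => max (σs i - 1) 0 with hh
  set gm : Fin p → ℝ := fun i => min (σs i) 1 with hgm
  set Ystar := R * Dg (q := q) h * Sᵀ with hYstar
  set G := R * Dg (q := q) gm * Sᵀ with hGdef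
  have hh0 : ∀ i, 0 ≤ h i := fun i => le_max_right _ _
  have hgm0 : ∀ i, 0 ≤ gm i := fun i => le_min (hnonneg i) zero_le_one
  have hgm1 : ∀ i, gm i ≤ 1 := fun i => min_le_right _ _
  -- A - Ystar = G
  have hAmY : A - Ystar = G := by
    rw [hA, hYstar, hGdef]
    have hDg : Dg (q := q) σs - Dg (q := q) h = Dg (q := q) gm := by
      ext i j
      simp only [Dg, Matrix.sub_apply, Matrix.of_apply]
      by_cases hij : (i : ℕ) = (j : ℕ)
      · simp only [hij, if_true]
        rcases le_total (σs i) 1 with hc | hc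
        · rw [hgm, hh]
          simp only
          rw [max_eq_right (by linarith), min_eq_left hc, sub_zero]
        · rw [hgm, hh]
          simp only
          rw [max_eq_left (by linarith), min_eq_right hc]
          ring
      · simp [hij]
    rw [← Matrix.sub_mul, ← Matrix.mul_sub, hDg]
  -- nuclear norm of Ystar
  have hnnY : nuclearNorm Ystar = ∑ i, h i := nn_sandwich hpq R hR1 S hS2 h hh0
  -- inner product of Ystar with G
  have hinner : trace (Ystar * Gᵀ) = ∑ i, h i := by
    rw [hYstar, hGdef, sandwich_mul hpq R S hS2, trace_conj R hR2]
    refine Finset.sum_congr rfl (fun i _ => ?_)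
    rcases le_total (σs i) 1 with hc | hc
    · rw [hh, hgm]; simp only
      rw [max_eq_right (by linarith), zero_mul]
    · rw [hh, hgm]; simp only
      rw [max_eq_left (by linarith), min_eq_right hc, mul_one]
  -- key inequality
  have hkey : trace (Y * Gᵀ) ≤ nuclearNorm Y := by
    rw [hGdef]
    exact key_ineq hp hpq R hR1 hR2 S hS1 hS2 gm hgm0 hgm1 Y
  -- Frobenius expansion
  have hFr : Fr (Y - A) = Fr (Y - Ystar) + 2 * ((∑ i, h i) - trace (Y * Gᵀ)) + Fr (Ystar - A) := by
    rw [Fr_expand Y Ystar A]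
    congr 2
    have hZA : Ystar - A = -G := by
      rw [← hAmY]; exact (neg_sub A Ystar).symm
    rw [hZA]
    rw [Matrix.transpose_neg, Matrix.mul_neg, Matrix.trace_neg, Matrix.sub_mul,
      Matrix.trace_sub, hinner]
    ring
  rw [hnnY, hFr]
  linarith


/-- the proximal mapping of the nuclear norm.  If
`A = R [Σ 0] Sᵀ` is an SVD of `A` and `h(t) = max{t−1,0}`, then `R [Σ_h 0] Sᵀ` is the
unique minimizer of `Y ↦ ‖Y‖_* + ½‖Y − A‖_F²`. -/
theorem stmt12 (p q : ℕ) (hp : 0 < p) (hpq : p ≤ q)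
    (R : Matrix (Fin p) (Fin p) ℝ) (hR1 : R * Rᵀ = 1) (hR2 : Rᵀ * R = 1)
    (S : Matrix (Fin q) (Fin q) ℝ) (hS1 : S * Sᵀ = 1) (hS2 : Sᵀ * S = 1)
    (σs : Fin p → ℝ) (hmono : ∀ i j : Fin p, i ≤ j → σs j ≤ σs i)
    (hnonneg : ∀ i, 0 ≤ σs i)
    (A : Matrix (Fin p) (Fin q) ℝ)
    (hA : A = R * Matrix.of (fun (i : Fin p) (j : Fin q) =>
        if (i : ℕ) = (j : ℕ) then σs i else 0) * Sᵀ) :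
    (∀ Y : Matrix (Fin p) (Fin q) ℝ,
      nuclearNorm (R * Matrix.of (fun (i : Fin p) (j : Fin q) =>
          if (i : ℕ) = (j : ℕ) then max (σs i - 1) 0 else 0) * Sᵀ) +
        (1 / 2) * frobNorm ((R * Matrix.of (fun (i : Fin p) (j : Fin q) =>
          if (i : ℕ) = (j : ℕ) then max (σs i - 1) 0 else 0) * Sᵀ) - A) ^ 2 ≤
      nuclearNorm Y + (1 / 2) * frobNorm (Y - A) ^ 2) ∧
    ∀ Y : Matrix (Fin p) (Fin q) ℝ,
      nuclearNorm Y + (1 / 2) * frobNorm (Y - A) ^ 2 ≤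
        nuclearNorm (R * Matrix.of (fun (i : Fin p) (j : Fin q) =>
          if (i : ℕ) = (j : ℕ) then max (σs i - 1) 0 else 0) * Sᵀ) +
          (1 / 2) * frobNorm ((R * Matrix.of (fun (i : Fin p) (j : Fin q) =>
            if (i : ℕ) = (j : ℕ) then max (σs i - 1) 0 else 0) * Sᵀ) - A) ^ 2 →
      Y = R * Matrix.of (fun (i : Fin p) (j : Fin q) =>
          if (i : ℕ) = (j : ℕ) then max (σs i - 1) 0 else 0) * Sᵀ := by
  have hEq : (Matrix.of (fun (i : Fin p) (j : Fin q) =>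
      if (i : ℕ) = (j : ℕ) then max (σs i - 1) 0 else 0))
      = Dg (q := q) (fun i => max (σs i - 1) 0) := rfl
  have hA' : A = R * Dg (q := q) σs * Sᵀ := hA
  have hm := master hp hpq R hR1 hR2 S hS1 hS2 σs hnonneg A hA'
  rw [hEq]
  set Ystar := R * Dg (q := q) (fun i => max (σs i - 1) 0) * Sᵀ with hY
  constructor
  · intro Y
    have h1 := hm Y
    rw [frob_sq, frob_sq]
    have h2 := Fr_nonneg (Y - Ystar)
    linarith
  · intro Y hY2
    rw [frob_sq, frob_sq] at hY2
    have h1 := hm Y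
    have h3 : Fr (Y - Ystar) = 0 :=
      le_antisymm (by linarith) (Fr_nonneg _)
    have h5 : ∑ i, ∑ j, ((Y - Ystar) i j)^2 = 0 := h3
    have houter := (Finset.sum_eq_zero_iff_of_nonneg
      (fun i _ => Finset.sum_nonneg fun j _ => sq_nonneg ((Y - Ystar) i j))).mp h5
    ext i j
    have hin := (Finset.sum_eq_zero_iff_of_nonneg
      (fun j _ => sq_nonneg ((Y - Ystar) i j))).mp (houter i (Finset.mem_univ i))
    have h6 : (Y - Ystar) i j = 0 :=
      (pow_eq_zero_iff (two_ne_zero)).mp (hin j (Finset.mem_univ j))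
    rw [Matrix.sub_apply] at h6
    linarith
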